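/- Let a ≥ 0 be an integer and suppose f_{(0,a)} attains its minimum over {1, …, T} at some point τ_a with τ_a ≤ T − s. Then f*_{(s,a)} = f*_{(0,a)} − s·c, where f*_{(s,a)} = min over t ∈ {s + 1, …, T} of f_{(s,a)}(t) and f*_{(0,a)} = min over t ∈ {1, …, T} of f_{(0,a)}(t). -/

import Mathlib

open MeasureTheory ProbabilityTheory Real

set_option maxHeartbeats 1000000 in
/-- Let `a ≥ 0` and suppose `f_{(0,a)}` attains its minimum over
`{1, …, T}` at some `τ_a` with `τ_a ≤ T − s`. Then
`f*_{(s,a)} = f*_{(0,a)} − s·c`, where `f*_{(s',a)} = min_{t ∈ {s'+1,…,T}} f_{(s',a)}(t)`. -/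
theorem shifted_min_objective_eq
    {Ω : Type*} [MeasureSpace Ω] [IsProbabilityMeasure (ℙ : Measure Ω)]
    (θ β g h m : ℝ) (hθ : 0 < θ) (hβ : 1 < β) (hg : 0 ≤ g) (hh : 0 ≤ h) (hm : 0 ≤ m)
    (q : ℕ → ℝ)
    (hq : ∀ t : ℕ, 1 ≤ t →
      q t = ((1 - Real.exp (-θ * (t : ℝ) ^ β)) * g
            + Real.exp (-θ * (t : ℝ) ^ β) * (h + m * t))
          / ((∑ k ∈ Finset.Icc 1 t,
              (Real.exp (-θ * ((k : ℝ) - 1) ^ β) - Real.exp (-θ * (k : ℝ) ^ β)) * (k : ℝ))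
            + Real.exp (-θ * (t : ℝ) ^ β) * (t : ℝ)))
    (c : ℝ) (hc : c = ⨅ t : ℕ, q (t + 1))
    (T s : ℕ) (hT : 1 ≤ T) (hsT : s < T)
    (a : ℕ)
    (La : Ω → ℕ) (hmeasLa : Measurable La) (hposLa : ∀ ω, 1 ≤ La ω)
    (hsurvLa : ∀ u : ℕ, ℙ {ω | u < La ω}
      = ENNReal.ofReal (Real.exp (θ * ((a : ℝ) ^ β - ((a : ℝ) + u) ^ β))))
    (f : ℕ → ℕ → ℝ)
    (hf : ∀ s' : ℕ, s' < T → ∀ t : ℕ, s' + 1 ≤ t → t ≤ T →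
      f s' t = ∫ ω, (if (s' : ℝ) + (La ω : ℝ) ≤ (t : ℝ) then
                  g + ((T : ℝ) - ((s' : ℝ) + (La ω : ℝ))) * c
                else h + ((t : ℝ) - (s' : ℝ) + (a : ℝ)) * m
                      + ((T : ℝ) - (t : ℝ)) * c) ∂ℙ)
    (τa : ℕ) (hτa1 : 1 ≤ τa) (hτa2 : τa ≤ T)
    (hτmin : ∀ t : ℕ, 1 ≤ t → t ≤ T → f 0 τa ≤ f 0 t)
    (hτa3 : τa + s ≤ T)
    (hne : (Finset.Icc (s + 1) T).Nonempty) (hne0 : (Finset.Icc 1 T).Nonempty) :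
    (Finset.Icc (s + 1) T).inf' hne (f s)
      = (Finset.Icc 1 T).inf' hne0 (f 0) - (s : ℝ) * c := by
  -- key pointwise shift identity
  have key : ∀ u : ℕ, 1 ≤ u → u + s ≤ T → f s (u + s) = f 0 u - (s : ℝ) * c := by
    intro u hu huT
    have h1 := hf s hsT (u + s) (by omega) huT
    have h0 := hf 0 (by omega) u (by omega) (by omega)
    rw [h1, h0]
    -- the integrand of `f 0 u` as a function of `La`
    set φ : ℕ → ℝ := fun n => if ((0 : ℕ) : ℝ) + (n : ℝ) ≤ (u : ℝ) then
        g + ((T : ℝ) - (((0 : ℕ) : ℝ) + (n : ℝ))) * c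
      else h + ((u : ℝ) - ((0 : ℕ) : ℝ) + (a : ℝ)) * m + ((T : ℝ) - (u : ℝ)) * c with hφ
    have hmeasφ : Measurable (fun ω => φ (La ω)) := by
      have : Measurable (φ ∘ La) := measurable_from_top.comp hmeasLa
      exact this
    have hint : Integrable (fun ω => φ (La ω)) ℙ := by
      set C : ℝ := |g| + ((T : ℝ) + u) * |c| + |h| + ((u : ℝ) + a) * |m| + ((T : ℝ) + u) * |c|
        with hC
      refine (integrable_const C).mono' hmeasφ.aestronglyMeasurable ?_
      filter_upwards with ω
      have hLa0 : (0 : ℝ) ≤ (La ω : ℝ) := Nat.cast_nonneg _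
      have hT0 : (0 : ℝ) ≤ (T : ℝ) := Nat.cast_nonneg _
      have hu0 : (0 : ℝ) ≤ (u : ℝ) := Nat.cast_nonneg _
      have ha0 : (0 : ℝ) ≤ (a : ℝ) := Nat.cast_nonneg _
      have hg0 : (0 : ℝ) ≤ |g| := abs_nonneg _
      have hh0 : (0 : ℝ) ≤ |h| := abs_nonneg _
      have hm0 : (0 : ℝ) ≤ |m| := abs_nonneg _
      have hc0 : (0 : ℝ) ≤ |c| := abs_nonneg _
      have hbm : |((u : ℝ) - ((0:ℕ):ℝ) + (a : ℝ)) * m| ≤ ((u : ℝ) + a) * |m| := by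
        rw [abs_mul]
        have : |((u : ℝ) - ((0:ℕ):ℝ) + (a : ℝ))| ≤ (u : ℝ) + a := by
          rw [abs_le]; push_cast; constructor <;> linarith
        exact mul_le_mul_of_nonneg_right this hm0
      have hbc : |((T : ℝ) - (u : ℝ)) * c| ≤ ((T : ℝ) + u) * |c| := by
        rw [abs_mul]
        have : |(T : ℝ) - (u : ℝ)| ≤ (T : ℝ) + u := by
          rw [abs_le]; constructor <;> linarith
        exact mul_le_mul_of_nonneg_right this hc0
      have hmn : (0:ℝ) ≤ ((u : ℝ) + a) * |m| := by positivity
      have hcn : (0:ℝ) ≤ ((T : ℝ) + u) * |c| := by positivity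
      simp only [hφ, Real.norm_eq_abs]
      split_ifs with hcase
      · have h2 : (La ω : ℝ) ≤ u := by push_cast at hcase; linarith
        have h3 : |((T : ℝ) - (((0:ℕ):ℝ) + (La ω : ℝ))) * c| ≤ ((T : ℝ) + u) * |c| := by
          rw [abs_mul]
          have : |(T : ℝ) - (((0:ℕ):ℝ) + (La ω : ℝ))| ≤ (T : ℝ) + u := by
            rw [abs_le]; push_cast; constructor <;> linarith
          exact mul_le_mul_of_nonneg_right this hc0
        have := abs_add_le g (((T : ℝ) - (((0:ℕ):ℝ) + (La ω : ℝ))) * c)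
        rw [hC]; linarith
      · have h5 := abs_add_le (h + ((u : ℝ) - ((0:ℕ):ℝ) + (a : ℝ)) * m) (((T : ℝ) - (u : ℝ)) * c)
        have h6 := abs_add_le h (((u : ℝ) - ((0:ℕ):ℝ) + (a : ℝ)) * m)
        rw [hC]; linarith
    have hcongr : ∀ ω : Ω,
        (if (s : ℝ) + (La ω : ℝ) ≤ ((u + s : ℕ) : ℝ) then
            g + ((T : ℝ) - ((s : ℝ) + (La ω : ℝ))) * c
          else h + (((u + s : ℕ) : ℝ) - (s : ℝ) + (a : ℝ)) * m
                + ((T : ℝ) - ((u + s : ℕ) : ℝ)) * c)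
        = φ (La ω) - (s : ℝ) * c := by
      intro ω
      simp only [hφ]
      by_cases hcase : (La ω : ℝ) ≤ (u : ℝ)
      · rw [if_pos (by push_cast; linarith), if_pos (by push_cast; linarith)]
        push_cast; ring
      · rw [if_neg (by push_cast at hcase ⊢; linarith), if_neg (by push_cast at hcase ⊢; linarith)]
        push_cast; ring
    calc (∫ ω, (if (s : ℝ) + (La ω : ℝ) ≤ ((u + s : ℕ) : ℝ) then
            g + ((T : ℝ) - ((s : ℝ) + (La ω : ℝ))) * c
          else h + (((u + s : ℕ) : ℝ) - (s : ℝ) + (a : ℝ)) * m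
                + ((T : ℝ) - ((u + s : ℕ) : ℝ)) * c) ∂ℙ)
        = ∫ ω, (φ (La ω) - (s : ℝ) * c) ∂ℙ := by
          exact integral_congr_ae (Filter.Eventually.of_forall hcongr)
      _ = (∫ ω, φ (La ω) ∂ℙ) - (s : ℝ) * c := by
          rw [integral_sub hint (integrable_const _), integral_const, probReal_univ,
            one_smul]
      _ = (∫ ω, (if ((0 : ℕ) : ℝ) + (La ω : ℝ) ≤ (u : ℝ) then
            g + ((T : ℝ) - (((0 : ℕ) : ℝ) + (La ω : ℝ))) * c
          else h + ((u : ℝ) - ((0 : ℕ) : ℝ) + (a : ℝ)) * m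
                + ((T : ℝ) - (u : ℝ)) * c) ∂ℙ) - (s : ℝ) * c := rfl
  -- rewrite the left-hand finset as the image of Icc 1 (T - s) under (· + s)
  have hTs : 1 ≤ T - s := by omega
  have himg : Finset.Icc (s + 1) T = (Finset.Icc 1 (T - s)).image (· + s) := by
    ext x
    simp only [Finset.mem_image, Finset.mem_Icc]
    constructor
    · rintro ⟨h1, h2⟩; exact ⟨x - s, by omega, by omega⟩
    · rintro ⟨y, ⟨h1, h2⟩, rfl⟩; omega
  have hne' : (Finset.Icc 1 (T - s)).Nonempty := ⟨1, by simp [hTs]⟩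
  have hτmem : τa ∈ Finset.Icc 1 (T - s) := Finset.mem_Icc.mpr ⟨hτa1, by omega⟩
  have hmin' : (Finset.Icc 1 (T - s)).inf' hne' (f 0) = f 0 τa := by
    apply le_antisymm (Finset.inf'_le _ hτmem)
    apply Finset.le_inf'
    intro t ht
    rw [Finset.mem_Icc] at ht
    exact hτmin t ht.1 (by omega)
  have hmin0 : (Finset.Icc 1 T).inf' hne0 (f 0) = f 0 τa := by
    apply le_antisymm (Finset.inf'_le _ (Finset.mem_Icc.mpr ⟨hτa1, hτa2⟩))
    apply Finset.le_inf'
    intro t ht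
    rw [Finset.mem_Icc] at ht
    exact hτmin t ht.1 ht.2
  have hLHS : (Finset.Icc (s + 1) T).inf' hne (f s)
      = (Finset.Icc 1 (T - s)).inf' hne' (fun u => f 0 u - (s : ℝ) * c) := by
    rw [Finset.inf'_congr hne himg (fun x _ => rfl)]
    rw [Finset.inf'_image]
    refine Finset.inf'_congr _ rfl ?_
    intro u hu
    rw [Finset.mem_Icc] at hu
    exact key u hu.1 (by omega)
  have hsub : (Finset.Icc 1 (T - s)).inf' hne' (fun u => f 0 u - (s : ℝ) * c)
      = (Finset.Icc 1 (T - s)).inf' hne' (f 0) - (s : ℝ) * c := by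
    apply le_antisymm
    · obtain ⟨b, hb, hbeq⟩ := Finset.exists_mem_eq_inf' hne' (f 0)
      rw [hbeq]
      have h8 : (Finset.Icc 1 (T - s)).inf' hne' (fun u => f 0 u - (s : ℝ) * c) ≤ f 0 b - (s:ℝ)*c :=
        Finset.inf'_le _ hb
      linarith
    · obtain ⟨b, hb, hbeq⟩ := Finset.exists_mem_eq_inf' hne'
        (fun u => f 0 u - (s : ℝ) * c)
      rw [hbeq]
      have h7 : (Finset.Icc 1 (T - s)).inf' hne' (f 0) ≤ f 0 b :=
        Finset.inf'_le (f 0) hb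
      linarith
  rw [hLHS, hsub, hmin', hmin0]
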